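/- For all n ≥ 1, the clique number of the parity-constrained Hanoi graph P^n equals 3; in particular, P^n contains a triangle but no K_4. -/

import Mathlib

/-- Parity constraint on a state: disc `d+1` (labelled `1,…,n`) may not sit on
peg `2` if it is even, nor on peg `1` if it is odd. -/
def pegOK (n : ℕ) (s : Fin n → Fin 4) : Prop :=
  ∀ d : Fin n, (Even ((d : ℕ) + 1) → s d ≠ 2) ∧ (Odd ((d : ℕ) + 1) → s d ≠ 1)

instance (n : ℕ) : DecidablePred (pegOK n) := fun s => by
  unfold pegOK; infer_instance

/-- Vertices of the parity-constrained Hanoi graph `P^n`. -/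
abbrev PVertex (n : ℕ) := {s : Fin n → Fin 4 // pegOK n s}

/-- The parity-constrained four-peg Hanoi graph `P^n`: two states are adjacent iff
they differ in exactly one coordinate `d` (a legal move of disc `d+1`) and no
smaller disc sits on either of the two pegs involved. -/
def PGraph (n : ℕ) : SimpleGraph (PVertex n) where
  Adj s t := ∃ d : Fin n,
    s.1 d ≠ t.1 d ∧ (∀ k, k ≠ d → s.1 k = t.1 k) ∧
    (∀ k, k < d → s.1 k ≠ s.1 d ∧ s.1 k ≠ t.1 d)
  symm := by
    constructor
    rintro s t ⟨d, hne, heq, hlt⟩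
    refine ⟨d, hne.symm, fun k hk => (heq k hk).symm, fun k hk => ?_⟩
    have h := hlt k hk
    rw [← heq k (ne_of_lt hk)]
    exact ⟨h.2, h.1⟩
  loopless := by constructor; rintro s ⟨d, hne, -⟩; exact hne rfl

instance (n : ℕ) : DecidableRel (PGraph n).Adj := fun s t =>
  decidable_of_iff (∃ d : Fin n,
    s.1 d ≠ t.1 d ∧ (∀ k, k ≠ d → s.1 k = t.1 k) ∧
    (∀ k, k < d → s.1 k ≠ s.1 d ∧ s.1 k ≠ t.1 d)) Iff.rfl

/-- A vertex where disc 1 is on peg `v ≠ 1` and all other discs on peg 0. -/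
def triVert (n : ℕ) (hn : 1 ≤ n) (v : Fin 4) (hv : v ≠ 1) : PVertex n :=
  ⟨fun i => if i = ⟨0, hn⟩ then v else 0, by
    intro d
    constructor
    · intro he
      by_cases hd : d = ⟨0, hn⟩
      · subst hd; simp at he
      · intro h; simp only [if_neg hd] at h; exact absurd h (by decide)
    · intro _
      by_cases hd : d = ⟨0, hn⟩
      · simpa [hd] using hv
      · intro h; simp only [if_neg hd] at h; exact absurd h (by decide)⟩

lemma triVert_adj (n : ℕ) (hn : 1 ≤ n) (v w : Fin 4) (hv : v ≠ 1) (hw : w ≠ 1)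
    (hvw : v ≠ w) : (PGraph n).Adj (triVert n hn v hv) (triVert n hn w hw) := by
  refine ⟨⟨0, hn⟩, by simpa [triVert] using hvw, fun k hk => by simp [triVert, hk],
    fun k hk => absurd hk (by simp [Fin.lt_def])⟩

lemma triVert_ne (n : ℕ) (hn : 1 ≤ n) (v w : Fin 4) (hv : v ≠ 1) (hw : w ≠ 1)
    (hvw : v ≠ w) : triVert n hn v hv ≠ triVert n hn w hw := by
  intro h
  exact hvw (by simpa [triVert] using congrFun (congrArg Subtype.val h) ⟨0, hn⟩)

/-- In a triangle, all three pairs differ in the same coordinate. -/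
lemma adj_coord_eq {n : ℕ} {a b c : PVertex n} {d d' : Fin n}
    (hab2 : ∀ k, k ≠ d → a.1 k = b.1 k) (hab1 : a.1 d ≠ b.1 d)
    (hac2 : ∀ k, k ≠ d' → a.1 k = c.1 k) (hac1 : a.1 d' ≠ c.1 d')
    (hbc : (PGraph n).Adj b c) : d = d' := by
  by_contra hdd
  obtain ⟨e, _, hbc2, -⟩ := hbc
  -- b d ≠ c d
  have h1 : b.1 d ≠ c.1 d := by
    rw [← hac2 d hdd]; exact fun h => hab1 h.symm
  have h2 : b.1 d' ≠ c.1 d' := by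
    rw [← hab2 d' (Ne.symm hdd)]; exact hac1
  have e1 : d = e := by by_contra h; exact h1 (hbc2 d h)
  have e2 : d' = e := by by_contra h; exact h2 (hbc2 d' h)
  exact hdd (e1.trans e2.symm)

lemma fin4_no_four_ne2 : ∀ w x y z : Fin 4, w ≠ 2 → x ≠ 2 → y ≠ 2 → z ≠ 2 →
    w ≠ x → w ≠ y → w ≠ z → x ≠ y → x ≠ z → y ≠ z → False := by
  have h : ∀ w x y z : Fin 4, ¬(w ≠ 2 ∧ x ≠ 2 ∧ y ≠ 2 ∧ z ≠ 2 ∧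
      w ≠ x ∧ w ≠ y ∧ w ≠ z ∧ x ≠ y ∧ x ≠ z ∧ y ≠ z) := by decide
  intro w x y z h1 h2 h3 h4 h5 h6 h7 h8 h9 h10
  exact h w x y z ⟨h1, h2, h3, h4, h5, h6, h7, h8, h9, h10⟩

lemma fin4_no_four_ne1 : ∀ w x y z : Fin 4, w ≠ 1 → x ≠ 1 → y ≠ 1 → z ≠ 1 →
    w ≠ x → w ≠ y → w ≠ z → x ≠ y → x ≠ z → y ≠ z → False := by
  have h : ∀ w x y z : Fin 4, ¬(w ≠ 1 ∧ x ≠ 1 ∧ y ≠ 1 ∧ z ≠ 1 ∧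
      w ≠ x ∧ w ≠ y ∧ w ≠ z ∧ x ≠ y ∧ x ≠ z ∧ y ≠ z) := by decide
  intro w x y z h1 h2 h3 h4 h5 h6 h7 h8 h9 h10
  exact h w x y z ⟨h1, h2, h3, h4, h5, h6, h7, h8, h9, h10⟩

lemma noK4 (n : ℕ) (t : Finset (PVertex n)) : ¬ (PGraph n).IsNClique 4 t := by
  rintro ⟨hc, hcard⟩
  have h1 : 0 < t.card := by omega
  obtain ⟨a, ha⟩ := Finset.card_pos.mp h1
  have h3 : (t.erase a).card = 3 := by rw [Finset.card_erase_of_mem ha, hcard]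
  obtain ⟨b, c, e, hbc, hbe, hce, herase⟩ := Finset.card_eq_three.mp h3
  have hbm : b ∈ t.erase a := by rw [herase]; simp
  have hcm : c ∈ t.erase a := by rw [herase]; simp
  have hem : e ∈ t.erase a := by rw [herase]; simp
  have hab : a ≠ b := (Finset.ne_of_mem_erase hbm).symm
  have hac : a ≠ c := (Finset.ne_of_mem_erase hcm).symm
  have hae : a ≠ e := (Finset.ne_of_mem_erase hem).symm
  have hb := Finset.mem_of_mem_erase hbm
  have hc' := Finset.mem_of_mem_erase hcm
  have he := Finset.mem_of_mem_erase hem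
  obtain ⟨d, hd1, hd2, -⟩ := hc ha hb hab
  obtain ⟨d', hd1', hd2', -⟩ := hc ha hc' hac
  obtain ⟨d'', hd1'', hd2'', -⟩ := hc ha he hae
  have hdd' : d = d' := adj_coord_eq hd2 hd1 hd2' hd1' (hc hb hc' hbc)
  have hdd'' : d = d'' := adj_coord_eq hd2 hd1 hd2'' hd1'' (hc hb he hbe)
  subst hdd'; subst hdd''
  -- all four values at coordinate d are pairwise distinct
  have vab : a.1 d ≠ b.1 d := hd1
  have vac : a.1 d ≠ c.1 d := hd1'
  have vae : a.1 d ≠ e.1 d := hd1''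
  have vbc : b.1 d ≠ c.1 d := by
    intro h
    apply hbc
    apply Subtype.ext
    funext k
    by_cases hk : k = d
    · subst hk; exact h
    · rw [← hd2 k hk, ← hd2' k hk]
  have vbe : b.1 d ≠ e.1 d := by
    intro h
    apply hbe
    apply Subtype.ext
    funext k
    by_cases hk : k = d
    · subst hk; exact h
    · rw [← hd2 k hk, ← hd2'' k hk]
  have vce : c.1 d ≠ e.1 d := by
    intro h
    apply hce
    apply Subtype.ext
    funext k
    by_cases hk : k = d
    · subst hk; exact h
    · rw [← hd2' k hk, ← hd2'' k hk]
  rcases Nat.even_or_odd ((d : ℕ) + 1) with hpar | hpar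
  · exact fin4_no_four_ne2 _ _ _ _ ((a.2 d).1 hpar) ((b.2 d).1 hpar)
      ((c.2 d).1 hpar) ((e.2 d).1 hpar) vab vac vae vbc vbe vce
  · exact fin4_no_four_ne1 _ _ _ _ ((a.2 d).2 hpar) ((b.2 d).2 hpar)
      ((c.2 d).2 hpar) ((e.2 d).2 hpar) vab vac vae vbc vbe vce

lemma triangle_exists (n : ℕ) (hn : 1 ≤ n) :
    ∃ t : Finset (PVertex n), (PGraph n).IsNClique 3 t := by
  classical
  set A := triVert n hn 0 (by decide)
  set B := triVert n hn 2 (by decide)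
  set C := triVert n hn 3 (by decide)
  have hAB : A ≠ B := triVert_ne n hn 0 2 _ _ (by decide)
  have hAC : A ≠ C := triVert_ne n hn 0 3 _ _ (by decide)
  have hBC : B ≠ C := triVert_ne n hn 2 3 _ _ (by decide)
  refine ⟨{A, B, C}, ?_, ?_⟩
  · intro x hx y hy hxy
    simp only [Finset.coe_insert, Set.mem_insert_iff, Finset.coe_singleton,
      Set.mem_singleton_iff] at hx hy
    rcases hx with rfl | rfl | rfl <;> rcases hy with rfl | rfl | rfl <;>
      first
        | exact absurd rfl hxy
        | exact triVert_adj n hn _ _ _ _ (by decide)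
  · rw [Finset.card_insert_of_notMem (by simp [hAB, hAC]),
      Finset.card_insert_of_notMem (by simp [hBC]), Finset.card_singleton]

/-- The clique number of `P^n` equals `3`: there is a triangle but no `K₄`. -/
theorem stmt16 : ∀ n : ℕ, 1 ≤ n →
    (PGraph n).cliqueNum = 3 ∧
    (∃ t : Finset (PVertex n), (PGraph n).IsNClique 3 t) ∧
    ∀ t : Finset (PVertex n), ¬ (PGraph n).IsNClique 4 t := by
  intro n hn
  obtain ⟨tri, htri⟩ := triangle_exists n hn
  refine ⟨?_, ⟨tri, htri⟩, fun t => noK4 n t⟩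
  have hle : (PGraph n).cliqueNum ≤ 3 := by
    by_contra h
    push_neg at h
    obtain ⟨s, hs⟩ := (PGraph n).exists_isNClique_cliqueNum
    have hsc := hs.2
    have h4 : 4 ≤ s.card := by omega
    obtain ⟨u, hu, hucard⟩ := Finset.exists_subset_card_eq h4
    exact noK4 n u ⟨hs.1.subset hu, hucard⟩
  have hge : 3 ≤ (PGraph n).cliqueNum := by
    have h1 := @SimpleGraph.IsClique.card_le_cliqueNum _ (PGraph n) _ tri htri.1
    have h2 := htri.2
    omega
  omega
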